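/- Let G be a finite group of odd order and nilpotency class at most 2. Define a binary operation on G by x ⊕ y := x·y·[y,x]^{(m+1)/2}, where [y,x] = y⁻¹x⁻¹yx is the group commutator and m is the (odd) order of the element [y,x]. Then ⊕ is commutative and associative, the group identity 1 is an identity for ⊕, and the group inverse x⁻¹ is an inverse of x for ⊕; hence (G, ⊕) is an abelian group on the same underlying set as G. -/

import Mathlib

/-- The class-2 Lazard addition `x ⊕ y := x·y·[y,x]^{(m+1)/2}`, where
`[y,x] = y⁻¹x⁻¹yx` is the group commutator and `m` is the order of `[y,x]`. -/
noncomputable def lazardAdd {G : Type*} [Group G] (x y : G) : G :=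
  x * y * (y⁻¹ * x⁻¹ * y * x) ^ ((orderOf (y⁻¹ * x⁻¹ * y * x) + 1) / 2)

section LazardAux

set_option linter.unusedSectionVars false

variable {G : Type*} [Group G] [Finite G]

/-- The commutator `[y,x] = y⁻¹x⁻¹yx`. -/
def lcom (x y : G) : G := y⁻¹ * x⁻¹ * y * x

lemma lcom_def (x y : G) : lcom x y = y⁻¹ * x⁻¹ * y * x := rfl

/-- The square-root function `z ↦ z^((m+1)/2)`. -/
noncomputable def lsqrt (z : G) : G := z ^ ((orderOf z + 1) / 2)

lemma lazardAdd_eq (x y : G) : lazardAdd x y = x * y * lsqrt (lcom x y) := rfl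

lemma odd_orderOf (hodd : Odd (Nat.card G)) (z : G) : Odd (orderOf z) := by
  rw [← Nat.not_even_iff_odd] at *
  intro he
  exact hodd ((even_iff_two_dvd).mpr (dvd_trans (even_iff_two_dvd.mp he) (orderOf_dvd_natCard z)))

lemma lsqrt_sq (hodd : Odd (Nat.card G)) (z : G) : lsqrt z * lsqrt z = z := by
  have hm := odd_orderOf hodd z
  have h2 : (orderOf z + 1) / 2 + (orderOf z + 1) / 2 = orderOf z + 1 := by
    obtain ⟨k, hk⟩ := hm
    omega
  rw [lsqrt, ← pow_add, h2, pow_succ, pow_orderOf_eq_one, one_mul]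

lemma lsqrt_inv (z : G) : lsqrt z⁻¹ = (lsqrt z)⁻¹ := by
  rw [lsqrt, lsqrt, orderOf_inv, inv_pow]

lemma lsqrt_one : (lsqrt (1 : G)) = 1 := one_pow _

lemma lsqrt_commute {z : G} (hz : ∀ g : G, Commute z g) (g : G) : Commute (lsqrt z) g :=
  (hz g).pow_left _

lemma sq_inj_comm (hodd : Odd (Nat.card G)) {a b : G} (h : Commute a b)
    (hab : a * a = b * b) : a = b := by
  have hd : (a⁻¹ * b) * (a⁻¹ * b) = 1 := by
    have hc : b * a⁻¹ = a⁻¹ * b := h.symm.inv_right.eq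
    calc a⁻¹ * b * (a⁻¹ * b) = a⁻¹ * (b * a⁻¹) * b := by group
    _ = a⁻¹ * (a⁻¹ * b) * b := by rw [hc]
    _ = a⁻¹ * a⁻¹ * (b * b) := by group
    _ = a⁻¹ * a⁻¹ * (a * a) := by rw [hab]
    _ = 1 := by group
  have h1 : orderOf (a⁻¹ * b) ∣ 2 := orderOf_dvd_of_pow_eq_one (by rw [pow_two]; exact hd)
  have h2 : orderOf (a⁻¹ * b) ∣ Nat.card G := orderOf_dvd_natCard _
  have h3 : orderOf (a⁻¹ * b) = 1 := by
    rcases (Nat.dvd_prime Nat.prime_two).mp h1 with h | h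
    · exact h
    · exfalso
      rw [← Nat.not_even_iff_odd] at hodd
      exact hodd (even_iff_two_dvd.mpr (h ▸ h2))
  exact (inv_mul_eq_one.mp (orderOf_eq_one_iff.mp h3)).symm ▸ rfl

lemma lsqrt_mul (hodd : Odd (Nat.card G)) {z w : G} (hz : ∀ g : G, Commute z g)
    (hw : ∀ g : G, Commute w g) : lsqrt (z * w) = lsqrt z * lsqrt w := by
  apply sq_inj_comm hodd
  · exact lsqrt_commute (fun g => ((hz g).mul_left (hw g))) _
  · have h1 : lsqrt (z * w) * lsqrt (z * w) = z * w := lsqrt_sq hodd _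
    have h2 : lsqrt z * lsqrt w * (lsqrt z * lsqrt w) = z * w := by
      have hc : lsqrt w * lsqrt z = lsqrt z * lsqrt w := ((lsqrt_commute hw _)).eq
      calc lsqrt z * lsqrt w * (lsqrt z * lsqrt w)
          = lsqrt z * (lsqrt w * lsqrt z) * lsqrt w := by group
        _ = lsqrt z * (lsqrt z * lsqrt w) * lsqrt w := by rw [hc]
        _ = (lsqrt z * lsqrt z) * (lsqrt w * lsqrt w) := by group
        _ = z * w := by rw [lsqrt_sq hodd, lsqrt_sq hodd]
    rw [h1, h2]

end LazardAux

open scoped commutatorElement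

theorem lazardAdd_abelianGroup
    (G : Type*) [Group G] [Finite G]
    (hodd : Odd (Nat.card G))
    (hclass : (⊤ : Subgroup G).lowerCentralSeries 2 = ⊥) :
    (∀ x y : G, lazardAdd x y = lazardAdd y x) ∧
    (∀ x y z : G, lazardAdd (lazardAdd x y) z = lazardAdd x (lazardAdd y z)) ∧
    (∀ x : G, lazardAdd x 1 = x) ∧
    (∀ x : G, lazardAdd 1 x = x) ∧
    (∀ x : G, lazardAdd x x⁻¹ = 1) := by
  -- commutators are central
  have hcen : ∀ x y g : G, Commute (lcom x y) g := by
    intro x y g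
    have h1 : (⁅y⁻¹, x⁻¹⁆ : G) ∈ (⊤ : Subgroup G).lowerCentralSeries 1 := by
      rw [Subgroup.top_lowerCentralSeries_one]
      exact Subgroup.commutator_mem_commutator (Subgroup.mem_top _) (Subgroup.mem_top _)
    have h2 : (⁅(⁅y⁻¹, x⁻¹⁆ : G), g⁆ : G) ∈ (⊤ : Subgroup G).lowerCentralSeries 2 := by
      rw [Subgroup.mem_lowerCentralSeries_succ_iff]
      exact Subgroup.subset_closure ⟨_, h1, g, Subgroup.mem_top g, rfl⟩
    rw [hclass, Subgroup.mem_bot] at h2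
    have h3 : Commute (⁅y⁻¹, x⁻¹⁆ : G) g := commutatorElement_eq_one_iff_commute.mp h2
    have h4 : (⁅y⁻¹, x⁻¹⁆ : G) = lcom x y := by
      rw [commutatorElement_def, lcom_def]; group
    rwa [h4] at h3
  -- bilinearity in the first argument
  have hbil : ∀ x y z : G, lcom (x * y) z = lcom x z * lcom y z := by
    intro x y z
    have h1 : x⁻¹ * z * x = z * lcom x z := by rw [lcom_def]; group
    calc lcom (x * y) z = z⁻¹ * y⁻¹ * (x⁻¹ * z * x) * y := by rw [lcom_def]; group
      _ = z⁻¹ * y⁻¹ * (z * lcom x z) * y := by rw [h1]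
      _ = z⁻¹ * y⁻¹ * z * (lcom x z * y) := by group
      _ = z⁻¹ * y⁻¹ * z * (y * lcom x z) := by rw [(hcen x z y).eq]
      _ = z⁻¹ * y⁻¹ * z * y * lcom x z := by group
      _ = lcom y z * lcom x z := by rw [lcom_def y z]
      _ = lcom x z * lcom y z := (hcen y z (lcom x z)).eq
  -- bilinearity in the second argument
  have hbil' : ∀ x y z : G, lcom x (y * z) = lcom x y * lcom x z := by
    intro x y z
    have h1 : y⁻¹ * x⁻¹ * y = lcom x y * x⁻¹ := by rw [lcom_def]; group
    calc lcom x (y * z) = z⁻¹ * (y⁻¹ * x⁻¹ * y) * z * x := by rw [lcom_def]; group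
      _ = z⁻¹ * (lcom x y * x⁻¹) * z * x := by rw [h1]
      _ = z⁻¹ * lcom x y * (x⁻¹ * z * x) := by group
      _ = lcom x y * z⁻¹ * (x⁻¹ * z * x) := by rw [← (hcen x y z⁻¹).eq]
      _ = lcom x y * lcom x z := by rw [lcom_def x z]; group
  -- central factors do not change commutators
  have hcc : ∀ x y w : G, (∀ g : G, Commute w g) → lcom (x * w) y = lcom x y := by
    intro x y w hw
    calc lcom (x * w) y = y⁻¹ * w⁻¹ * ((x⁻¹ * y * x) * w) := by rw [lcom_def]; group
      _ = y⁻¹ * w⁻¹ * (w * (x⁻¹ * y * x)) := by rw [(hw (x⁻¹ * y * x)).symm.eq]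
      _ = lcom x y := by rw [lcom_def]; group
  have hcc' : ∀ x y w : G, (∀ g : G, Commute w g) → lcom x (y * w) = lcom x y := by
    intro x y w hw
    calc lcom x (y * w) = w⁻¹ * ((y⁻¹ * x⁻¹ * y) * w) * x := by rw [lcom_def]; group
      _ = w⁻¹ * (w * (y⁻¹ * x⁻¹ * y)) * x := by rw [(hw (y⁻¹ * x⁻¹ * y)).symm.eq]
      _ = lcom x y := by rw [lcom_def]; group
  refine ⟨?_, ?_, ?_, ?_, ?_⟩
  · -- commutativity
    intro x y
    rw [lazardAdd_eq, lazardAdd_eq]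
    have hinvc : lcom y x = (lcom x y)⁻¹ := by rw [lcom_def y x, lcom_def x y]; group
    rw [hinvc, lsqrt_inv]
    have hs := lsqrt_sq hodd (lcom x y)
    calc x * y * lsqrt (lcom x y)
        = y * x * (lcom x y)⁻¹ * lsqrt (lcom x y) := by rw [lcom_def]; group
      _ = y * x * (lcom x y)⁻¹ * (lsqrt (lcom x y) * lsqrt (lcom x y)) * (lsqrt (lcom x y))⁻¹ := by
            group
      _ = y * x * (lcom x y)⁻¹ * lcom x y * (lsqrt (lcom x y))⁻¹ := by rw [hs]
      _ = y * x * (lsqrt (lcom x y))⁻¹ := by group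
  · -- associativity
    intro x y z
    rw [lazardAdd_eq, lazardAdd_eq, lazardAdd_eq, lazardAdd_eq]
    have hwxy := lsqrt_commute (hcen x y)
    have hwyz := lsqrt_commute (hcen y z)
    have h1 : lcom (x * y * lsqrt (lcom x y)) z = lcom x z * lcom y z := by
      rw [hcc _ _ _ hwxy, hbil]
    have h2 : lcom x (y * z * lsqrt (lcom y z)) = lcom x y * lcom x z := by
      rw [hcc' _ _ _ hwyz, hbil']
    rw [h1, h2, lsqrt_mul hodd (hcen x z) (hcen y z), lsqrt_mul hodd (hcen x y) (hcen x z)]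
    calc x * y * lsqrt (lcom x y) * z * (lsqrt (lcom x z) * lsqrt (lcom y z))
        = x * y * (lsqrt (lcom x y) * z) * (lsqrt (lcom x z) * lsqrt (lcom y z)) := by group
      _ = x * y * (z * lsqrt (lcom x y)) * (lsqrt (lcom x z) * lsqrt (lcom y z)) := by
            rw [(hwxy z).eq]
      _ = x * (y * z) * (lsqrt (lcom x y) * (lsqrt (lcom x z) * lsqrt (lcom y z))) := by group
      _ = x * (y * z) * (lsqrt (lcom x y) * (lsqrt (lcom y z) * lsqrt (lcom x z))) := by
            rw [(lsqrt_commute (hcen x z) (lsqrt (lcom y z))).eq]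
      _ = x * (y * z) * (lsqrt (lcom x y) * lsqrt (lcom y z)) * lsqrt (lcom x z) := by group
      _ = x * (y * z) * (lsqrt (lcom y z) * lsqrt (lcom x y)) * lsqrt (lcom x z) := by
            rw [(hwxy (lsqrt (lcom y z))).eq]
      _ = x * (y * z * lsqrt (lcom y z)) * (lsqrt (lcom x y) * lsqrt (lcom x z)) := by group
  · intro x
    rw [lazardAdd_eq]
    have h : lcom x 1 = 1 := by rw [lcom_def]; group
    rw [h, lsqrt_one, mul_one, mul_one]
  · intro x
    rw [lazardAdd_eq]
    have h : lcom 1 x = 1 := by rw [lcom_def]; group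
    rw [h, lsqrt_one, mul_one, one_mul]
  · intro x
    rw [lazardAdd_eq]
    have h : lcom x x⁻¹ = 1 := by rw [lcom_def]; group
    rw [h, lsqrt_one, mul_one, mul_inv_cancel]
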